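/- Let (a_k) and (b_k) be nonnegative real sequences with ∑_{k=0}^∞ a_k b_k < +∞ and ∑_{k=0}^∞ a_k = +∞, and let (c_k) be a positive real sequence with c_k → 1 and such that the partial sums ∑_{k=0}^n ln c_k are uniformly bounded in absolute value. If b_{k+1} ≤ c_k b_k for all k ∈ ℕ, then A_k b_k → 0 as k → ∞, where A_k := ∑_{i=0}^k a_i; i.e., b_k = o(1/A_k). -/

import Mathlib

open Filter Topology

theorem stmt_10 (a b c : ℕ → ℝ)
    (ha : ∀ k, 0 ≤ a k) (hb : ∀ k, 0 ≤ b k)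
    (hab : Summable (fun k => a k * b k))
    (hadiv : Tendsto (fun n => ∑ i ∈ Finset.range (n + 1), a i) atTop atTop)
    (hc : ∀ k, 0 < c k)
    (hc1 : Tendsto c atTop (nhds 1))
    (hlog : ∃ M : ℝ, ∀ n, |∑ k ∈ Finset.range (n + 1), Real.log (c k)| ≤ M)
    (hbc : ∀ k, b (k + 1) ≤ c k * b k) :
    Tendsto (fun k => (∑ i ∈ Finset.range (k + 1), a i) * b k) atTop (nhds 0) := by
  obtain ⟨M, hM⟩ := hlog
  have hM0 : 0 ≤ M := le_trans (abs_nonneg _) (hM 0)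
  have hM' : ∀ n, |∑ k ∈ Finset.range n, Real.log (c k)| ≤ M := by
    intro n
    cases n with
    | zero => simpa using hM0
    | succ n => exact hM n
  set C := Real.exp (2 * M) with hCdef
  have hC0 : 0 < C := Real.exp_pos _
  have key : ∀ m n, m ≤ n → b n ≤ C * b m := by
    intro m n hmn
    have h1 : b n ≤ b m * ∏ k ∈ Finset.Ico m n, c k := by
      induction n, hmn using Nat.le_induction with
      | base => simp
      | succ n hmn ih =>
        calc b (n+1) ≤ c n * b n := hbc n
          _ ≤ c n * (b m * ∏ k ∈ Finset.Ico m n, c k) :=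
              mul_le_mul_of_nonneg_left ih (hc n).le
          _ = b m * ∏ k ∈ Finset.Ico m (n+1), c k := by
              rw [Finset.prod_Ico_succ_top hmn]; ring
    have h2 : ∏ k ∈ Finset.Ico m n, c k ≤ C := by
      have heq : ∏ k ∈ Finset.Ico m n, c k
          = Real.exp (∑ k ∈ Finset.Ico m n, Real.log (c k)) := by
        rw [Real.exp_sum]
        exact Finset.prod_congr rfl fun k _ => (Real.exp_log (hc k)).symm
      rw [heq]
      apply Real.exp_le_exp.2
      rw [Finset.sum_Ico_eq_sub _ hmn]
      have h3 := hM' n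
      have h4 := hM' m
      rw [abs_le] at h3 h4
      linarith [h3.2, h4.1]
    calc b n ≤ b m * ∏ k ∈ Finset.Ico m n, c k := h1
      _ ≤ b m * C := mul_le_mul_of_nonneg_left h2 (hb m)
      _ = C * b m := mul_comm _ _
  have hb0 : Tendsto b atTop (nhds 0) := by
    rw [Metric.tendsto_atTop]
    intro ε hε
    have hε' : 0 < ε / (2 * C) := by positivity
    have hex : ∃ m, b m < ε / (2 * C) := by
      by_contra h
      push_neg at h
      have hsa : Summable a := by
        apply Summable.of_nonneg_of_le ha (fun k => ?_) (hab.div_const (ε / (2*C)))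
        rw [le_div_iff₀ hε']
        exact mul_le_mul_of_nonneg_left (h k) (ha k)
      have hts := hsa.hasSum.tendsto_sum_nat.comp (tendsto_add_atTop_nat 1)
      exact not_tendsto_atTop_of_tendsto_nhds (by simpa [Function.comp_def] using hts) hadiv
    obtain ⟨m, hm⟩ := hex
    refine ⟨m, fun n hn => ?_⟩
    rw [Real.dist_eq, sub_zero, abs_of_nonneg (hb n)]
    calc b n ≤ C * b m := key m n hn
      _ < C * (ε / (2 * C)) := mul_lt_mul_of_pos_left hm hC0
      _ = ε / 2 := by field_simp
      _ < ε := by linarith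
  rw [Metric.tendsto_atTop]
  intro ε hε
  have htail : Tendsto (fun m => ∑' k, (fun k => a k * b k) (k + m)) atTop (nhds 0) :=
    tendsto_sum_nat_add (fun k => a k * b k)
  rw [Metric.tendsto_atTop] at htail
  obtain ⟨m, hm⟩ := htail (ε / (4 * C)) (by positivity)
  have hmtail : ∑' k, a (k + (m+1)) * b (k + (m+1)) < ε / (4 * C) := by
    have h5 := hm (m+1) (by omega)
    rw [Real.dist_eq, sub_zero] at h5
    exact lt_of_le_of_lt (le_abs_self _) h5
  have hAm : Tendsto (fun n => (∑ i ∈ Finset.range (m+1), a i) * b n) atTop (nhds 0) := by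
    simpa using hb0.const_mul (∑ i ∈ Finset.range (m+1), a i)
  rw [Metric.tendsto_atTop] at hAm
  obtain ⟨N, hN⟩ := hAm (ε / 2) (by positivity)
  refine ⟨max N m, fun n hn => ?_⟩
  have hnN : N ≤ n := le_trans (le_max_left _ _) hn
  have hnm : m ≤ n := le_trans (le_max_right _ _) hn
  have hAn_nonneg : 0 ≤ ∑ i ∈ Finset.range (n+1), a i :=
    Finset.sum_nonneg fun i _ => ha i
  rw [Real.dist_eq, sub_zero, abs_of_nonneg (mul_nonneg hAn_nonneg (hb n))]
  have hsplit : ∑ i ∈ Finset.range (n+1), a i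
      = ∑ i ∈ Finset.range (m+1), a i + ∑ i ∈ Finset.Ico (m+1) (n+1), a i := by
    simp only [Finset.range_eq_Ico]
    exact (Finset.sum_Ico_consecutive a (Nat.zero_le _) (Nat.succ_le_succ hnm)).symm
  have h1 : (∑ i ∈ Finset.range (m+1), a i) * b n < ε / 2 := by
    have h6 := hN n hnN
    rw [Real.dist_eq, sub_zero] at h6
    exact lt_of_le_of_lt (le_abs_self _) h6
  have h2 : (∑ i ∈ Finset.Ico (m+1) (n+1), a i) * b n ≤ ε / 4 := by
    rw [Finset.sum_mul]
    calc ∑ i ∈ Finset.Ico (m+1) (n+1), a i * b n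
        ≤ ∑ i ∈ Finset.Ico (m+1) (n+1), C * (a i * b i) := by
          apply Finset.sum_le_sum
          intro i hi
          rw [Finset.mem_Ico] at hi
          have hbn : b n ≤ C * b i := key i n (by omega)
          calc a i * b n ≤ a i * (C * b i) := mul_le_mul_of_nonneg_left hbn (ha i)
            _ = C * (a i * b i) := by ring
      _ = C * ∑ i ∈ Finset.Ico (m+1) (n+1), a i * b i := by rw [← Finset.mul_sum]
      _ ≤ C * ∑' k, a (k + (m+1)) * b (k + (m+1)) := by
          apply mul_le_mul_of_nonneg_left ?_ hC0.le
          have hsum : Summable (fun k => a (k + (m+1)) * b (k + (m+1))) :=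
            (summable_nat_add_iff (f := fun k => a k * b k) (m+1)).2 hab
          have heq : ∑ i ∈ Finset.Ico (m+1) (n+1), a i * b i
              = ∑ i ∈ Finset.range (n+1-(m+1)), a (i + (m+1)) * b (i + (m+1)) := by
            rw [Finset.sum_Ico_eq_sum_range]
            exact Finset.sum_congr rfl fun i _ => by rw [Nat.add_comm]
          rw [heq]
          exact Summable.sum_le_tsum _ (fun i _ => mul_nonneg (ha _) (hb _)) hsum
      _ ≤ C * (ε / (4 * C)) := mul_le_mul_of_nonneg_left hmtail.le hC0.le
      _ = ε / 4 := by field_simp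
  calc (∑ i ∈ Finset.range (n+1), a i) * b n
      = (∑ i ∈ Finset.range (m+1), a i) * b n
        + (∑ i ∈ Finset.Ico (m+1) (n+1), a i) * b n := by rw [hsplit, add_mul]
    _ < ε / 2 + ε / 4 := by linarith
    _ < ε := by linarith
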